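/- Let S_A be the additive subsemigroup of ℤ⁴ generated by 𝒢₂ = {g₁, g₂, g₃, g₄, g₅, g₆, g₇, g₃−g₁, g₆−g₁, g₃−g₂, g₅−g₄, g₆−g₄, g₆−g₇}, and let R be the additive subsemigroup of ℤ⁴ generated by H₂ = {g₂, g₄, g₃−g₂, g₃−g₁, g₆−g₁, g₆−g₇, (1,0,1,0)}. Then S_A ⊆ R, and R is contained in the saturation of S_A, i.e., for every x ∈ R there is a positive integer n with n·x ∈ S_A; in particular 2·(1,0,1,0) = (g₃−g₂) + g₁ ∈ S_A. -/
import Mathlib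


/-- The seven lattice points `g₁, …, g₇` (0-indexed as `g 0, …, g 6`). -/
def g : Fin 7 → (Fin 4 → ℤ) :=
  ![![1,0,0,0], ![0,1,0,0], ![1,1,2,0], ![0,0,0,1],
    ![0,2,2,1], ![1,1,1,0], ![0,1,1,1]]

/-- The generating set `𝒢₂`. -/
def G₂ : Set (Fin 4 → ℤ) :=
  {g 0, g 1, g 2, g 3, g 4, g 5, g 6,
   g 2 - g 0, g 5 - g 0, g 2 - g 1, g 4 - g 3, g 5 - g 3, g 5 - g 6}

/-- The generating set `H₂`. -/
def H₂ : Set (Fin 4 → ℤ) :=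
  {g 1, g 3, g 2 - g 1, g 2 - g 0, g 5 - g 0, g 5 - g 6, ![1,0,1,0]}

/-- The subsemigroup `S_A` of `ℤ⁴` generated by `𝒢₂`. -/
def SA : AddSubmonoid (Fin 4 → ℤ) := AddSubmonoid.closure G₂

/-- The subsemigroup `R` of `ℤ⁴` generated by `H₂`. -/
def R : AddSubmonoid (Fin 4 → ℤ) := AddSubmonoid.closure H₂

lemma memR (x : Fin 4 → ℤ) (h : x ∈ H₂) : x ∈ R := AddSubmonoid.subset_closure h

lemma memSA (x : Fin 4 → ℤ) (h : x ∈ G₂) : x ∈ SA := AddSubmonoid.subset_closure h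

lemma two_smul_eq : (2 : ℕ) • (![1,0,1,0] : Fin 4 → ℤ) = (g 2 - g 1) + g 0 := by
  decide

lemma key_mem : (g 2 - g 1) + g 0 ∈ SA :=
  add_mem (memSA _ (by simp [G₂])) (memSA _ (by simp [G₂]))

lemma SA_le_R : SA ≤ R := by
  apply AddSubmonoid.closure_le.2
  intro x hx
  simp only [G₂, Set.mem_insert_iff, Set.mem_singleton_iff] at hx
  rcases hx with h|h|h|h|h|h|h|h|h|h|h|h|h <;> subst h
  · have e : g 0 = (g 5 - g 6) + g 3 := by decide
    rw [e]; exact add_mem (memR _ (by simp [H₂])) (memR _ (by simp [H₂]))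
  · exact memR _ (by simp [H₂])
  · have e : g 2 = (g 2 - g 1) + g 1 := by decide
    rw [e]; exact add_mem (memR _ (by simp [H₂])) (memR _ (by simp [H₂]))
  · exact memR _ (by simp [H₂])
  · have e : g 4 = g 3 + (g 5 - g 0) + (g 5 - g 0) := by decide
    rw [e]
    exact add_mem (add_mem (memR _ (by simp [H₂])) (memR _ (by simp [H₂])))
      (memR _ (by simp [H₂]))
  · have e : g 5 = (![1,0,1,0] : Fin 4 → ℤ) + g 1 := by decide
    rw [e]; exact add_mem (memR _ (by simp [H₂])) (memR _ (by simp [H₂]))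
  · have e : g 6 = (g 5 - g 0) + g 3 := by decide
    rw [e]; exact add_mem (memR _ (by simp [H₂])) (memR _ (by simp [H₂]))
  · exact memR _ (by simp [H₂])
  · exact memR _ (by simp [H₂])
  · exact memR _ (by simp [H₂])
  · have e : g 4 - g 3 = (g 5 - g 0) + (g 5 - g 0) := by decide
    rw [e]; exact add_mem (memR _ (by simp [H₂])) (memR _ (by simp [H₂]))
  · have e : g 5 - g 3 = (g 5 - g 6) + (g 5 - g 0) := by decide
    rw [e]; exact add_mem (memR _ (by simp [H₂])) (memR _ (by simp [H₂]))
  · exact memR _ (by simp [H₂])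

/-- The saturation of `S_A` as an additive submonoid. -/
def T : AddSubmonoid (Fin 4 → ℤ) where
  carrier := {x | ∃ n : ℕ, 0 < n ∧ n • x ∈ SA}
  zero_mem' := ⟨1, one_pos, by simpa using SA.zero_mem⟩
  add_mem' := by
    rintro a b ⟨n, hn, ha⟩ ⟨m, hm, hb⟩
    refine ⟨n * m, Nat.mul_pos hn hm, ?_⟩
    rw [smul_add]
    exact add_mem (by rw [mul_comm, mul_smul]; exact AddSubmonoid.nsmul_mem SA ha m)
      (by rw [mul_smul]; exact AddSubmonoid.nsmul_mem SA hb n)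

lemma R_le_T : R ≤ T := by
  apply AddSubmonoid.closure_le.2
  intro x hx
  simp only [H₂, Set.mem_insert_iff, Set.mem_singleton_iff] at hx
  rcases hx with h|h|h|h|h|h|h <;> subst h
  · exact ⟨1, one_pos, by simpa using memSA _ (by simp [G₂])⟩
  · exact ⟨1, one_pos, by simpa using memSA _ (by simp [G₂])⟩
  · exact ⟨1, one_pos, by simpa using memSA _ (by simp [G₂])⟩
  · exact ⟨1, one_pos, by simpa using memSA _ (by simp [G₂])⟩
  · exact ⟨1, one_pos, by simpa using memSA _ (by simp [G₂])⟩
  · exact ⟨1, one_pos, by simpa using memSA _ (by simp [G₂])⟩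
  · exact ⟨2, two_pos, by rw [two_smul_eq]; exact key_mem⟩

/-- `S_A ⊆ R`, and `R` is contained in the saturation of `S_A`; in particular
`2·(1,0,1,0) = (g₃ − g₂) + g₁ ∈ S_A`. -/
theorem stmt_11 :
    SA ≤ R ∧
    (∀ x ∈ R, ∃ n : ℕ, 0 < n ∧ n • x ∈ SA) ∧
    (2 : ℕ) • (![1,0,1,0] : Fin 4 → ℤ) = (g 2 - g 1) + g 0 ∧
    (g 2 - g 1) + g 0 ∈ SA :=
  ⟨SA_le_R, fun x hx => R_le_T hx, two_smul_eq, key_mem⟩
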